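/- arXiv:1208.2766 — 2 statements merged into one kernel-verified Lean document; each statement's English description precedes it below -/
import Mathlib

section
/- For |Σ| ≥ 2 and |A| ≥ 2, there do not exist positively expansive cellular automata on A^{Σ*}. -/
open Function

variable {Sig A : Type*}

/-- Configurations over the tree `Sig*`: maps from the free monoid (lists) to `A`. -/
abbrev Config (Sig A : Type*) := List Sig → A

/-- Shift action: `(shift f v) w = f (v ++ w)`. -/
def shift (f : Config Sig A) (v : List Sig) : Config Sig A := fun w => f (v ++ w)

/-- `Delta Sig n` is the set of words of length `< n` (i.e. `Δ_n`). -/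
def Delta (Sig : Type*) (n : ℕ) : Type _ := {w : List Sig // w.length < n}

/-- Restriction of a configuration to `Δ_n`. -/
def restrict (f : Config Sig A) (n : ℕ) : Delta Sig n → A := fun w => f w.val

/-- The CA defined by a local map `μ` of radius `r`. -/
def caMap (r : ℕ) (μ : (Delta Sig (r + 1) → A) → A) : Config Sig A → Config Sig A :=
  fun f v => μ (restrict (shift f v) (r + 1))

/-- `τ` is a cellular automaton: it admits a radius `r ≥ 1` and a local defining map. -/
def IsCA (τ : Config Sig A → Config Sig A) : Prop :=
  ∃ r : ℕ, 1 ≤ r ∧ ∃ μ : (Delta Sig (r + 1) → A) → A,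
    ∀ (f : Config Sig A) (v : List Sig), τ f v = μ (restrict (shift f v) (r + 1))

/-- A subshift: a closed, shift-invariant set of configurations. -/
def IsSubshift [TopologicalSpace A] (X : Set (Config Sig A)) : Prop :=
  IsClosed X ∧ ∀ f ∈ X, ∀ v : List Sig, shift f v ∈ X

/-- The blocks of size `n` of `X`. -/
def blockSet (X : Set (Config Sig A)) (n : ℕ) : Set (Delta Sig n → A) :=
  {p | ∃ f ∈ X, restrict f n = p}

/-- Positive expansiveness with constant `N`. -/
def PosExpansive (τ : Config Sig A → Config Sig A) (N : ℕ) : Prop :=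
  1 ≤ N ∧ ∀ f₁ f₂ : Config Sig A, f₁ ≠ f₂ →
    ∃ t : ℕ, restrict (τ^[t] f₁) N ≠ restrict (τ^[t] f₂) N

/-- The set `P(τ, n, t)` of `t`-tuples of traces on `Δ_n`. -/
def Pset (τ : Config Sig A → Config Sig A) (n t : ℕ) : Set (Fin t → Delta Sig n → A) :=
  {s | ∃ f : Config Sig A, ∀ i : Fin t, s i = restrict (τ^[(i : ℕ)] f) n}

/-- The block `a ◁ p` on `Δ_{r+1}` with root value `a` and agreeing with `p` elsewhere. -/
def rootIns (r : ℕ) (a : A) (p : {w : List Sig // w.length < r + 1 ∧ w ≠ []} → A) :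
    Delta Sig (r + 1) → A :=
  fun w => if h : w.val.length = 0 then a else
    p ⟨w.val, ⟨w.2, fun he => h (by simp [he])⟩⟩

/-- Permutivity: for every pattern on `Δ_{r+1} \ {ε}`, the induced map on root values is
a permutation of `A`. -/
def Permutive (r : ℕ) (μ : (Delta Sig (r + 1) → A) → A) : Prop :=
  ∀ p : {w : List Sig // w.length < r + 1 ∧ w ≠ []} → A,
    Function.Bijective (fun a : A => μ (rootIns r a p))

/-- The image under the local map `μ` of a block of size `n + r`: a block of size `n`. -/
def blockImage (r n : ℕ) (μ : (Delta Sig (r + 1) → A) → A)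
    (p : Delta Sig (n + r) → A) : Delta Sig n → A :=
  fun v => μ (fun w => p ⟨v.val ++ w.val, by
    have hv := v.2; have hw := w.2
    simp only [List.length_append]; omega⟩)

/-- A diamond of `(r, μ)`: two distinct blocks of size `n = m + r > 2r + 2` coinciding
with a block `p ∈ A^{Δ_r}` on `Δ_r` and on `vΔ_r` for every `v` of length `m = n - r`,
with the same image under `μ`. -/
def HasDiamond (r : ℕ) (μ : (Delta Sig (r + 1) → A) → A) : Prop :=
  ∃ (m : ℕ) (_ : r + 2 < m) (p : Delta Sig r → A)
    (p₁ p₂ : Delta Sig (m + r) → A),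
    p₁ ≠ p₂ ∧
    (∀ w : Delta Sig r,
      p₁ ⟨w.val, by have := w.2; omega⟩ = p w ∧
      p₂ ⟨w.val, by have := w.2; omega⟩ = p w) ∧
    (∀ v : List Sig, ∀ hv : v.length = m, ∀ w : Delta Sig r,
      p₁ ⟨v ++ w.val, by have := w.2; simp only [List.length_append]; omega⟩ = p w ∧
      p₂ ⟨v ++ w.val, by have := w.2; simp only [List.length_append]; omega⟩ = p w) ∧
    blockImage r m μ p₁ = blockImage r m μ p₂

/-- Right-closingness of the CA `caMap r μ`. -/
def RightClosing (r : ℕ) (μ : (Delta Sig (r + 1) → A) → A) : Prop :=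
  ∃ N : ℕ, ∀ (p : Delta Sig r → A) (q : Delta Sig (r * N) → A),
    (∃ f : Config Sig A, restrict f r = p ∧ restrict (caMap r μ f) (r * N) = q) →
    ∃! ps : {v : List Sig // v.length = r} → Delta Sig r → A,
      ∀ f : Config Sig A, restrict f r = p → restrict (caMap r μ f) (r * N) = q →
        ∀ (v : {v : List Sig // v.length = r}) (w : Delta Sig r),
          f (v.val ++ w.val) = ps v w



/-! ### Auxiliary lemmas -/

instance DeltaFinite [Finite Sig] (n : ℕ) : Finite (Delta Sig n) :=
  (List.finite_length_lt Sig n).to_subtype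

lemma shift_shift (f : Config Sig A) (v w : List Sig) :
    shift (shift f v) w = shift f (v ++ w) := by
  funext u; simp [shift, List.append_assoc]

lemma caMap_shift {r : ℕ} (μ : (Delta Sig (r+1) → A) → A) (f : Config Sig A) (v : List Sig) :
    caMap r μ (shift f v) = shift (caMap r μ f) v := by
  funext w
  simp only [caMap, shift_shift]
  rfl

lemma caMap_iter_shift {r : ℕ} (μ : (Delta Sig (r+1) → A) → A) (t : ℕ)
    (f : Config Sig A) (v : List Sig) :
    (caMap r μ)^[t] (shift f v) = shift ((caMap r μ)^[t] f) v := by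
  induction t generalizing f with
  | zero => rfl
  | succ t ih =>
    rw [Function.iterate_succ_apply, Function.iterate_succ_apply, caMap_shift, ih]

lemma caMap_local {r : ℕ} (μ : (Delta Sig (r+1) → A) → A) {n : ℕ} {f g : Config Sig A}
    (h : ∀ w : List Sig, w.length < n + r → f w = g w) :
    ∀ w : List Sig, w.length < n → caMap r μ f w = caMap r μ g w := by
  intro w hw
  unfold caMap
  congr 1
  funext u
  show f (w ++ u.val) = g (w ++ u.val)
  exact h _ (by have := u.2; simp only [List.length_append]; omega)

lemma caMap_iter_local {r : ℕ} (μ : (Delta Sig (r+1) → A) → A) (t : ℕ) {n : ℕ}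
    {f g : Config Sig A}
    (h : ∀ w : List Sig, w.length < n + r * t → f w = g w) :
    ∀ w : List Sig, w.length < n → (caMap r μ)^[t] f w = (caMap r μ)^[t] g w := by
  induction t generalizing n f g with
  | zero => intro w hw; exact h w (by omega)
  | succ t ih =>
    intro w hw
    rw [Function.iterate_succ_apply, Function.iterate_succ_apply]
    refine ih (n := n) ?_ w hw
    refine caMap_local μ (n := n + r * t) (fun u hu => h u ?_)
    have : r * (t + 1) = r * t + r := by ring
    omega

lemma exists_step [Finite Sig] [Finite A] {r N : ℕ}
    (μ : (Delta Sig (r+1) → A) → A)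
    (hexp : ∀ f g : Config Sig A, f ≠ g →
      ∃ t, restrict ((caMap r μ)^[t] f) N ≠ restrict ((caMap r μ)^[t] g) N) :
    ∃ T : ℕ, ∀ f g : Config Sig A,
      (∀ t < T, restrict ((caMap r μ)^[t] f) N = restrict ((caMap r μ)^[t] g) N) →
      restrict f (N + 1) = restrict g (N + 1) := by
  by_contra hc
  push_neg at hc
  choose F G hFG hne using hc
  set U := Filter.hyperfilter ℕ with hUdef
  have hlim : ∀ (F : ℕ → Config Sig A) (w : List Sig),
      ∃ a : A, ∀ᶠ T in (U : Filter ℕ), F T w = a := by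
    intro F w
    obtain ⟨a, ha⟩ := Ultrafilter.eq_pure_of_finite (U.map (fun T => F T w))
    refine ⟨a, ?_⟩
    have h1 : {a} ∈ U.map (fun T => F T w) := by rw [ha]; exact Ultrafilter.mem_pure.2 rfl
    rw [Ultrafilter.mem_map] at h1
    filter_upwards [h1] with T hT using hT
  choose f hf using hlim F
  choose g hg using hlim G
  have key : ∀ k : ℕ, ∀ᶠ T in (U : Filter ℕ),
      ∀ w : Delta Sig k, F T w.val = f w.val ∧ G T w.val = g w.val := by
    intro k
    rw [Filter.eventually_all]
    intro w
    exact (hf w.val).and (hg w.val)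
  have hne' : restrict f (N+1) ≠ restrict g (N+1) := by
    intro heq
    obtain ⟨T, hT⟩ := (key (N+1)).exists
    apply hne T
    funext w
    show F T w.val = G T w.val
    rw [(hT w).1, (hT w).2]
    exact congrFun heq w
  have htr : ∀ t : ℕ, restrict ((caMap r μ)^[t] f) N = restrict ((caMap r μ)^[t] g) N := by
    intro t
    have hgt : ∀ᶠ T in (U : Filter ℕ), t < T :=
      (Filter.eventually_gt_atTop t).filter_mono Nat.hyperfilter_le_atTop
    obtain ⟨T, hT1, hT2⟩ := (hgt.and (key (N + r * t))).exists
    funext w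
    show (caMap r μ)^[t] f w.val = (caMap r μ)^[t] g w.val
    have h1 : (caMap r μ)^[t] f w.val = (caMap r μ)^[t] (F T) w.val :=
      caMap_iter_local μ t (n := N) (fun u hu => ((hT2 ⟨u, hu⟩).1).symm) w.val w.2
    have h2 : (caMap r μ)^[t] g w.val = (caMap r μ)^[t] (G T) w.val :=
      caMap_iter_local μ t (n := N) (fun u hu => ((hT2 ⟨u, hu⟩).2).symm) w.val w.2
    rw [h1, h2]
    exact congrFun (hFG T t hT1) w
  have hfg : f ≠ g := fun h => hne' (by rw [h])
  obtain ⟨t, ht⟩ := hexp f g hfg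
  exact ht (htr t)

lemma determine {r N T : ℕ} (μ : (Delta Sig (r+1) → A) → A)
    (hT : ∀ f g : Config Sig A,
      (∀ t < T, restrict ((caMap r μ)^[t] f) N = restrict ((caMap r μ)^[t] g) N) →
      restrict f (N + 1) = restrict g (N + 1)) :
    ∀ m : ℕ, ∀ f g : Config Sig A,
      (∀ t < 1 + m * T, restrict ((caMap r μ)^[t] f) N = restrict ((caMap r μ)^[t] g) N) →
      ∀ w : List Sig, w.length < N + m → f w = g w := by
  intro m
  induction m with
  | zero =>
    intro f g h w hw
    exact congrFun (h 0 (by omega)) ⟨w, by omega⟩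
  | succ m ih =>
    intro f g h w hw
    have hsp : w = w.take m ++ w.drop m := (List.take_append_drop m w).symm
    have hv : (w.take m).length ≤ m := by
      simp [List.length_take]
    have hu : (w.drop m).length < N + 1 := by
      simp only [List.length_drop]; omega
    have step : restrict (shift f (w.take m)) (N+1) = restrict (shift g (w.take m)) (N+1) := by
      apply hT
      intro t ht
      funext x
      show (caMap r μ)^[t] (shift f (w.take m)) x.val
        = (caMap r μ)^[t] (shift g (w.take m)) x.val
      rw [caMap_iter_shift, caMap_iter_shift]
      show (caMap r μ)^[t] f (w.take m ++ x.val) = (caMap r μ)^[t] g (w.take m ++ x.val)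
      have hmt : ∀ s < 1 + m * T,
          restrict ((caMap r μ)^[s] ((caMap r μ)^[t] f)) N
            = restrict ((caMap r μ)^[s] ((caMap r μ)^[t] g)) N := by
        intro s hs
        rw [← Function.iterate_add_apply, ← Function.iterate_add_apply]
        apply h
        have : (m + 1) * T = m * T + T := by ring
        omega
      exact ih _ _ hmt _ (by have hx := x.2; simp only [List.length_append]; omega)
    have hval : f (w.take m ++ w.drop m) = g (w.take m ++ w.drop m) :=
      congrFun step ⟨w.drop m, hu⟩
    rw [hsp]
    exact hval

lemma sq_le_two_pow : ∀ m : ℕ, 4 ≤ m → m * m ≤ 2 ^ m := by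
  intro m
  induction m with
  | zero => intro h; omega
  | succ k ih =>
    intro h
    rcases Nat.lt_or_ge k 4 with hk | hk
    · have : k = 3 := by omega
      subst this; norm_num
    · have h1 := ih hk
      have h2 : 2 ^ (k + 1) = 2 ^ k + 2 ^ k := by ring
      nlinarith

lemma two_pow_growth (a b : ℕ) : ∃ m : ℕ, a + b * m < 2 ^ m := by
  refine ⟨a + b + 4, ?_⟩
  have h := sq_le_two_pow (a + b + 4) (by omega)
  nlinarith

lemma two_pow_le_card_delta [Finite Sig] (hSig : 2 ≤ Nat.card Sig) {k n : ℕ} (hk : k < n) :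
    2 ^ k ≤ Nat.card (Delta Sig n) := by
  have hnt : Nontrivial Sig := Finite.one_lt_card_iff_nontrivial.1 (by omega)
  obtain ⟨x, y, hxy⟩ := hnt.exists_pair_ne
  have hinj : Function.Injective (fun b : Fin k → Bool =>
      (⟨List.ofFn (fun i => if b i then x else y), by simp; omega⟩ : Delta Sig n)) := by
    intro b c hbc
    have h1 : List.ofFn (fun i => if b i then x else y)
        = List.ofFn (fun i => if c i then x else y) := congrArg Subtype.val hbc
    have h2 := List.ofFn_injective h1
    funext i
    have h3 := congrFun h2 i
    by_contra hne
    cases hb : b i <;> cases hc : c i <;> simp_all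
  calc 2 ^ k = Nat.card (Fin k → Bool) := by simp [Nat.card_fun]
    _ ≤ Nat.card (Delta Sig n) := Nat.card_le_card_of_injective _ hinj

/-- for `|Sig| ≥ 2` (and `|A| ≥ 2`) there are no positively expansive CA
on the full tree shift. -/
theorem no_expansive_CA [Finite Sig] [Finite A]
    (hSig : 2 ≤ Nat.card Sig) (hA : 2 ≤ Nat.card A) :
    ¬ ∃ (τ : Config Sig A → Config Sig A) (N : ℕ), IsCA τ ∧ PosExpansive τ N := by
    classical
  rintro ⟨τ, N, ⟨r, hr, μ, hμ⟩, hN1, hexp⟩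
  have hτ : τ = caMap r μ := by funext f v; exact hμ f v
  subst hτ
  have hntA : Nontrivial A := Finite.one_lt_card_iff_nontrivial.1 (by omega)
  have hneA : Nonempty A := inferInstance
  obtain ⟨a0⟩ := hneA
  obtain ⟨T, hT⟩ := exists_step μ hexp
  have hdet := determine μ hT
  set C := Nat.card (Delta Sig N) with hC
  have hcount : ∀ m : ℕ, Nat.card (Delta Sig (N + m)) ≤ C * (1 + m * T) := by
    intro m
    let ext : (Delta Sig (N + m) → A) → Config Sig A := fun p w =>
      if h : w.length < N + m then p ⟨w, h⟩ else a0
    have hinj : Function.Injective (fun p : Delta Sig (N + m) → A =>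
        fun t : Fin (1 + m * T) => restrict ((caMap r μ)^[t.val] (ext p)) N) := by
      intro p q hpq
      funext w
      have h1 := hdet m (ext p) (ext q) (fun t ht => congrFun hpq ⟨t, ht⟩) w.val w.2
      exact (by simpa [ext, dif_pos w.2] using h1 : p ⟨w.val, w.2⟩ = q ⟨w.val, w.2⟩)
    have hle := Nat.card_le_card_of_injective _ hinj
    rw [Nat.card_fun, Nat.card_fun, Nat.card_fun, ← pow_mul] at hle
    simp only [Nat.card_eq_fintype_card, Fintype.card_fin] at hle
    have h1 : 1 < Nat.card A := by omega
    have h2 := (Nat.pow_le_pow_iff_right h1).1 hle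
    calc Nat.card (Delta Sig (N + m)) ≤ Nat.card (Delta Sig N) * (1 + m * T) := h2
      _ = C * (1 + m * T) := by rw [hC]
  obtain ⟨m, hm2⟩ := two_pow_growth C (C * T)
  have hlow : 2 ^ (N + m - 1) ≤ Nat.card (Delta Sig (N + m)) :=
    two_pow_le_card_delta hSig (by omega)
  have contra : Nat.card (Delta Sig (N + m)) < Nat.card (Delta Sig (N + m)) := by
    calc Nat.card (Delta Sig (N + m)) ≤ C * (1 + m * T) := hcount m
      _ = C + (C * T) * m := by ring
      _ < 2 ^ m := hm2
      _ ≤ 2 ^ (N + m - 1) := Nat.pow_le_pow_right (by norm_num) (by omega)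
      _ ≤ Nat.card (Delta Sig (N + m)) := hlow
  exact absurd contra (lt_irrefl _)
end

section
/- Let τ be a CA of radius r ≥ 1 on A^{Σ*}. If for every n ≥ 1 and every block q ∈ A^{Δ_n}, the set μ^{-1}(q) of blocks in A^{Δ_{n+r}} mapping to q under the induced local map has cardinality exactly |A|^{|Δ_{n+r}| − |Δ_n|}, then τ is surjective. -/
open Function

variable {Sig A : Type*}

instance deltaFinite [Finite Sig] (n : ℕ) : Finite (Delta Sig n) :=
  (List.finite_length_lt Sig n).to_subtype

/-- if every block `q ∈ A^{Δ_n}` has exactly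
`|A|^{|Δ_{n+r}| - |Δ_n|}` preimages under the induced local map, then `τ` is surjective. -/
theorem card_eq_imp_surjective [Finite Sig] [Finite A] [Nonempty A]
    (r : ℕ) (hr : 1 ≤ r) (μ : (Delta Sig (r + 1) → A) → A)
    (h : ∀ n : ℕ, 1 ≤ n → ∀ q : Delta Sig n → A,
      Nat.card {p : Delta Sig (n + r) → A // blockImage r n μ p = q} =
        Nat.card A ^ (Nat.card (Delta Sig (n + r)) - Nat.card (Delta Sig n))) :
    Function.Surjective (caMap r μ) := by
  classical
  letI : TopologicalSpace A := ⊥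
  haveI : DiscreteTopology A := ⟨rfl⟩
  intro g
  -- key identity
  have key : ∀ (f : Config Sig A) (n : ℕ),
      restrict (caMap r μ f) n = blockImage r n μ (restrict f (n + r)) := by
    intro f n; rfl
  -- the closed sets
  set C : ℕ → Set (Config Sig A) :=
    fun n => {f | ∀ v : List Sig, v.length ≤ n → caMap r μ f v = g v} with hC
  have hne : ∀ n, (C n).Nonempty := by
    intro n
    have h1 : 1 ≤ n + 1 := Nat.le_add_left 1 n
    have hcard := h (n + 1) h1 (restrict g (n + 1))
    have hApos : 0 < Nat.card A := Nat.card_pos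
    have hpos : 0 < Nat.card {p : Delta Sig (n + 1 + r) → A //
        blockImage r (n + 1) μ p = restrict g (n + 1)} := by
      rw [hcard]; exact pow_pos hApos _
    have hfin : Finite {p : Delta Sig (n + 1 + r) → A //
        blockImage r (n + 1) μ p = restrict g (n + 1)} := by infer_instance
    obtain ⟨⟨p, hp⟩⟩ := (Nat.card_pos_iff.mp hpos).1
    refine ⟨fun w => if hw : w.length < n + 1 + r then p ⟨w, hw⟩ else Classical.arbitrary A,
      fun v hv => ?_⟩
    have hrest : restrict (fun w => if hw : w.length < n + 1 + r then p ⟨w, hw⟩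
        else Classical.arbitrary A) (n + 1 + r) = p := by
      funext w; simp [restrict, w.2]; rfl
    have := key (fun w => if hw : w.length < n + 1 + r then p ⟨w, hw⟩
        else Classical.arbitrary A) (n + 1)
    rw [hrest, hp] at this
    exact congrFun this ⟨v, by omega⟩
  have hclosed : ∀ n, IsClosed (C n) := by
    intro n
    have : C n = ⋂ v : {v : List Sig // v.length ≤ n},
        {f : Config Sig A | caMap r μ f v.val = g v.val} := by
      ext f; simp only [Set.mem_iInter, Set.mem_setOf_eq, hC]
      exact ⟨fun hf v => hf v.val v.2, fun hf v hv => hf ⟨v, hv⟩⟩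
    rw [this]
    refine isClosed_iInter fun v => ?_
    have hcont : Continuous fun f : Config Sig A => caMap r μ f v.val := by
      have h1 : Continuous fun f : Config Sig A =>
          (fun w : Delta Sig (r + 1) => f (v.val ++ w.val)) :=
        continuous_pi fun w => continuous_apply _
      exact (continuous_of_discreteTopology (f := μ)).comp h1
    exact isClosed_eq hcont continuous_const
  have hcpt : ∀ n, IsCompact (C n) := fun n => (hclosed n).isCompact
  have hdir : Directed (· ⊇ ·) C := by
    intro m n
    exact ⟨m + n, fun f hf v hv => hf v (by omega), fun f hf v hv => hf v (by omega)⟩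
  obtain ⟨f, hf⟩ := IsCompact.nonempty_iInter_of_directed_nonempty_isCompact_isClosed
    C hdir hne hcpt hclosed
  refine ⟨f, funext fun v => ?_⟩
  have := Set.mem_iInter.mp hf v.length
  exact this v le_rfl
end
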